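/- Let α₁,…,αₙ (n ≥ 1) be nonzero complex linear forms on ℂ^ℓ, Q(z) = ∏ᵢ αᵢ(z), M = {z : Q(z) ≠ 0}, F = Q⁻¹(1), and M* the image of M in ℙ(ℂ^ℓ). Then the restriction to F of the quotient map π : ℂ^ℓ ∖ {0} → ℙ(ℂ^ℓ) is an n-fold covering map of F onto M*: it is a covering map, and every fiber π⁻¹([z]) ∩ F has exactly n elements. -/

import Mathlib

/-- The quotient topology on the projectivization of a topological vector space. -/
noncomputable instance projectivizationTopology {K V : Type*} [DivisionRing K] [AddCommGroup V]
    [Module K V] [TopologicalSpace V] : TopologicalSpace (Projectivization K V) := by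
  unfold Projectivization; infer_instance

namespace MilnorCover
open Complex Projectivization Set Topology

variable {ℓ n : ℕ} (α : Fin n → ((Fin ℓ → ℂ) →ₗ[ℂ] ℂ))

def Qp : (Fin ℓ → ℂ) → ℂ := fun z => ∏ i, α i z

lemma Qp_continuous : Continuous (Qp α) :=
  continuous_finset_prod _ fun i _ => (α i).continuous_of_finiteDimensional

lemma Qp_smul (c : ℂ) (z : Fin ℓ → ℂ) : Qp α (c • z) = c ^ n * Qp α z := by
  simp only [Qp, map_smul, smul_eq_mul, Finset.prod_mul_distrib, Finset.prod_const,
    Finset.card_univ, Fintype.card_fin]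

variable (hn : 1 ≤ n)

include hn in
lemma ne_zero_of_Qp {z : Fin ℓ → ℂ} (h : Qp α z ≠ 0) : z ≠ 0 := by
  rintro rfl
  exact h (Finset.prod_eq_zero (Finset.mem_univ (⟨0, hn⟩ : Fin n)) (map_zero _))

abbrev Fib := {z : Fin ℓ → ℂ // Qp α z = 1}

abbrev Mstar := {q : Projectivization ℂ (Fin ℓ → ℂ) //
  ∃ z : Fin ℓ → ℂ, ∃ hz : z ≠ 0, Qp α z ≠ 0 ∧ Projectivization.mk ℂ z hz = q}

include hn in
lemma fib_ne_zero (z : Fib α) : (z : Fin ℓ → ℂ) ≠ 0 :=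
  ne_zero_of_Qp α hn (by rw [z.2]; exact one_ne_zero)

noncomputable def pmap (z : Fib α) : Mstar α :=
  ⟨Projectivization.mk ℂ z.1 (fib_ne_zero α hn z),
    z.1, fib_ne_zero α hn z, by rw [z.2]; exact one_ne_zero, rfl⟩

lemma pmap_continuous : Continuous (pmap α hn) := by
  refine Continuous.subtype_mk ?_ _
  show Continuous fun z : Fib α =>
    (Quotient.mk'' (⟨z.1, fib_ne_zero α hn z⟩ : {v : Fin ℓ → ℂ // v ≠ 0}) :
      Projectivization ℂ (Fin ℓ → ℂ))
  exact continuous_quotient_mk'.comp (continuous_subtype_val.subtype_mk _)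

noncomputable def mkQ : {v : Fin ℓ → ℂ // v ≠ 0} → Projectivization ℂ (Fin ℓ → ℂ) := Quotient.mk''

lemma mk''_eq_mk (v : { v : Fin ℓ → ℂ // v ≠ 0 }) :
    (Quotient.mk'' v : Projectivization ℂ (Fin ℓ → ℂ)) = Projectivization.mk ℂ v.1 v.2 := rfl

lemma mkQ_eq_mk (v : { v : Fin ℓ → ℂ // v ≠ 0 }) :
    mkQ v = Projectivization.mk ℂ v.1 v.2 := rfl

lemma isOpenMap_mk : IsOpenMap (mkQ (ℓ := ℓ)) := by
  intro U hU
  have key : (mkQ ⁻¹' (mkQ '' U) : Set {v : Fin ℓ → ℂ // v ≠ 0}) =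
      ⋃ c : ℂˣ, (fun v : {v : Fin ℓ → ℂ // v ≠ 0} =>
        (⟨(c : ℂ) • v.1, smul_ne_zero (Units.ne_zero c) v.2⟩ : {v : Fin ℓ → ℂ // v ≠ 0})) ⁻¹' U := by
    ext v
    simp only [Set.mem_preimage, Set.mem_image, Set.mem_iUnion]
    constructor
    · rintro ⟨u, hu, h⟩
      rw [mkQ_eq_mk, mkQ_eq_mk, Projectivization.mk_eq_mk_iff] at h
      obtain ⟨a, ha⟩ := h
      refine ⟨a, ?_⟩
      have : (⟨(a : ℂ) • v.1, smul_ne_zero (Units.ne_zero a) v.2⟩ :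
          {v : Fin ℓ → ℂ // v ≠ 0}) = u := Subtype.ext ha
      rwa [this]
    · rintro ⟨c, hc⟩
      refine ⟨_, hc, ?_⟩
      rw [mkQ_eq_mk, mkQ_eq_mk, Projectivization.mk_eq_mk_iff]
      exact ⟨c, rfl⟩
  have hopen : IsOpen (mkQ ⁻¹' (mkQ '' U) : Set {v : Fin ℓ → ℂ // v ≠ 0}) := by
    rw [key]
    exact isOpen_iUnion fun c => hU.preimage ((continuous_subtype_val.const_smul (c : ℂ)).subtype_mk _)
  exact isQuotientMap_quotient_mk'.isOpen_preimage.mp hopen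

lemma continuousAt_of_mk {β : Type*} [TopologicalSpace β]
    (G : Projectivization ℂ (Fin ℓ → ℂ) → β) (v : {v : Fin ℓ → ℂ // v ≠ 0})
    (h : ContinuousAt (fun w : {v : Fin ℓ → ℂ // v ≠ 0} => G (mkQ w)) v) :
    ContinuousAt G (mkQ v) := by
  have h1 : 𝓝 (mkQ v) ≤ Filter.map mkQ (𝓝 v) := isOpenMap_mk.nhds_le v
  calc Filter.map G (𝓝 (mkQ v))
      ≤ Filter.map G (Filter.map mkQ (𝓝 v)) := Filter.map_mono h1
    _ = Filter.map (fun w : {v : Fin ℓ → ℂ // v ≠ 0} => G (mkQ w)) (𝓝 v) := Filter.map_map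
    _ ≤ 𝓝 (G (mkQ v)) := h

variable (φ : (Fin ℓ → ℂ) →ₗ[ℂ] ℂ)

lemma g_aux (a b : { v : Fin ℓ → ℂ // v ≠ 0 }) (t : ℂ) (h : (a : Fin ℓ → ℂ) = t • (b : Fin ℓ → ℂ)) :
    φ a.1 ^ n * (Qp α a.1)⁻¹ = φ b.1 ^ n * (Qp α b.1)⁻¹ := by
  have ht : t ≠ 0 := by rintro rfl; exact a.2 (by simp [h])
  rw [h, Qp_smul, map_smul, smul_eq_mul, mul_pow, mul_inv]
  have h2 : t ^ n * φ b.1 ^ n * ((t ^ n)⁻¹ * (Qp α b.1)⁻¹) =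
      (t ^ n * (t ^ n)⁻¹) * (φ b.1 ^ n * (Qp α b.1)⁻¹) := by ring
  rw [h2, mul_inv_cancel₀ (pow_ne_zero n ht), one_mul]

/-- The scale-invariant function `φ(z)^n/Q(z)` on projective space. -/
noncomputable def gR : Projectivization ℂ (Fin ℓ → ℂ) → ℂ :=
  Projectivization.lift (fun v => φ v.1 ^ n * (Qp α v.1)⁻¹) (g_aux α φ)

@[simp] lemma gR_mk {z : Fin ℓ → ℂ} (hz : z ≠ 0) :
    gR α φ (Projectivization.mk ℂ z hz) = φ z ^ n * (Qp α z)⁻¹ := rfl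

lemma gR_continuousAt {z : Fin ℓ → ℂ} (hz : z ≠ 0) (hQ : Qp α z ≠ 0) :
    ContinuousAt (gR α φ) (Projectivization.mk ℂ z hz) := by
  apply continuousAt_of_mk (v := ⟨z, hz⟩)
 
  apply ContinuousAt.mul
  · exact (((φ.continuous_of_finiteDimensional).comp continuous_subtype_val).pow n).continuousAt
  · exact (((Qp_continuous α).comp continuous_subtype_val).continuousAt).inv₀ hQ

lemma s_aux (a b : { v : Fin ℓ → ℂ // v ≠ 0 }) (t : ℂ) (h : (a : Fin ℓ → ℂ) = t • (b : Fin ℓ → ℂ)) :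
    (φ a.1)⁻¹ • a.1 = (φ b.1)⁻¹ • b.1 := by
  have ht : t ≠ 0 := by rintro rfl; exact a.2 (by simp [h])
  rw [h, map_smul, smul_eq_mul, mul_inv, smul_smul]
  rcases eq_or_ne (φ b.1) 0 with h0 | h0
  · simp [h0]
  · rw [mul_comm (t:ℂ)⁻¹, mul_assoc, inv_mul_cancel₀ ht, mul_one]

/-- The scale-invariant section `z ↦ z/φ(z)` on projective space. -/
noncomputable def sP : Projectivization ℂ (Fin ℓ → ℂ) → (Fin ℓ → ℂ) :=
  Projectivization.lift (fun v => (φ v.1)⁻¹ • v.1) (s_aux φ)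

@[simp] lemma sP_mk {z : Fin ℓ → ℂ} (hz : z ≠ 0) :
    sP φ (Projectivization.mk ℂ z hz) = (φ z)⁻¹ • z := rfl

lemma sP_continuousAt {z : Fin ℓ → ℂ} (hz : z ≠ 0) (hφ : φ z ≠ 0) :
    ContinuousAt (sP φ) (Projectivization.mk ℂ z hz) := by
  apply continuousAt_of_mk (v := ⟨z, hz⟩)
 
  show ContinuousAt ((fun w : {v : Fin ℓ → ℂ // v ≠ 0} => (φ w.1)⁻¹) • (fun w : {v : Fin ℓ → ℂ // v ≠ 0} => w.1)) _
  apply ContinuousAt.smul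
  · exact (((φ.continuous_of_finiteDimensional).comp continuous_subtype_val).continuousAt).inv₀ hφ
  · exact continuous_subtype_val.continuousAt

include hn in
lemma pmap_surjective : ∀ q : Mstar α, ∃ z : Fib α, pmap α hn z = q := by
  rintro ⟨q, z, hz, hQ, rfl⟩
  set c : ℂ := (Qp α z)⁻¹ ^ ((n : ℂ)⁻¹) with hc
  have hcn : c ^ n = (Qp α z)⁻¹ := Complex.cpow_nat_inv_pow _ (by omega)
  have hc0 : c ≠ 0 := by
    intro h; rw [h, zero_pow (by omega)] at hcn; exact hQ (by simpa using hcn.symm)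
  have hmem : Qp α (c • z) = 1 := by rw [Qp_smul, hcn, inv_mul_cancel₀ hQ]
  refine ⟨⟨c • z, hmem⟩, Subtype.ext ?_⟩
  show Projectivization.mk ℂ (c • z) _ = Projectivization.mk ℂ z hz
  rw [Projectivization.mk_eq_mk_iff]
  exact ⟨Units.mk0 c hc0, rfl⟩



lemma roots_eq (hn : 1 ≤ n) : {ζ : ℂ | ζ ^ n = 1} = ↑(Polynomial.nthRootsFinset n (1 : ℂ)) := by
  ext ζ
  simp [Polynomial.mem_nthRootsFinset (by omega : 0 < n) (1 : ℂ)]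

lemma roots_finite (hn : 1 ≤ n) : Finite {ζ : ℂ // ζ ^ n = 1} := by
  have : ({ζ : ℂ | ζ ^ n = 1}).Finite := by
    rw [roots_eq hn]; exact (Polynomial.nthRootsFinset n (1 : ℂ)).finite_toSet
  exact this.to_subtype

lemma roots_card (hn : 1 ≤ n) : Nat.card {ζ : ℂ // ζ ^ n = 1} = n := by
  have h1 : Nat.card {ζ : ℂ // ζ ^ n = 1} = ({ζ : ℂ | ζ ^ n = 1}).ncard :=
    Nat.card_coe_set_eq _
  rw [h1, roots_eq hn, Set.ncard_coe_finset,
    (Complex.isPrimitiveRoot_exp n (by omega)).card_nthRootsFinset]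

include hn in
lemma card_fiber (q : Mstar α) : Nat.card {z : Fib α // pmap α hn z = q} = n := by
  obtain ⟨z₀, hz₀⟩ := pmap_surjective α hn q
  have hz00 := fib_ne_zero α hn z₀
  have hbij : Function.Bijective (fun ζ : {ζ : ℂ // ζ ^ n = 1} =>
      (⟨⟨ζ.1 • z₀.1, by rw [Qp_smul, ζ.2, one_mul, z₀.2]⟩, by
        have hζ0 : ζ.1 ≠ 0 := by
          intro h
          exact one_ne_zero (by rw [← ζ.2, h, zero_pow (by omega : n ≠ 0)])
        rw [← hz₀]
        refine Subtype.ext ?_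
        show Projectivization.mk ℂ (ζ.1 • z₀.1) _ = Projectivization.mk ℂ z₀.1 _
        rw [Projectivization.mk_eq_mk_iff]
        exact ⟨Units.mk0 ζ.1 hζ0, rfl⟩⟩ : {z : Fib α // pmap α hn z = q})) := by
    constructor
    · intro ζ ζ' h
      have h2 : ζ.1 • z₀.1 = ζ'.1 • z₀.1 := congrArg (fun w => w.1.1) h
      exact Subtype.ext (smul_left_injective ℂ hz00 h2)
    · rintro ⟨z, hzq⟩
      have h3 : Projectivization.mk ℂ z.1 (fib_ne_zero α hn z) =
          Projectivization.mk ℂ z₀.1 hz00 := by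
        have := congrArg Subtype.val (hzq.trans hz₀.symm)
        exact this
      rw [Projectivization.mk_eq_mk_iff] at h3
      obtain ⟨a, ha⟩ := h3
      rw [Units.smul_def] at ha
      have han : (a : ℂ) ^ n = 1 := by
        have : Qp α ((a : ℂ) • z₀.1) = 1 := by rw [ha]; exact z.2
        rwa [Qp_smul, z₀.2, mul_one] at this
      exact ⟨⟨a, han⟩, Subtype.ext (Subtype.ext ha)⟩
  rw [← Nat.card_congr (Equiv.ofBijective _ hbij), roots_card hn]



/-- `n`-th root of `gR`. -/
noncomputable def rr (x : Projectivization ℂ (Fin ℓ → ℂ)) : ℂ := gR α φ x ^ ((n : ℂ)⁻¹)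

include hn in
lemma rr_pow (x : Projectivization ℂ (Fin ℓ → ℂ)) : rr α φ x ^ n = gR α φ x :=
  Complex.cpow_nat_inv_pow _ (by omega)

include hn in
lemma rr_ne (x : Projectivization ℂ (Fin ℓ → ℂ)) (h : gR α φ x ≠ 0) : rr α φ x ≠ 0 := by
  intro h0
  exact h (by rw [← rr_pow α hn φ x, h0, zero_pow (by omega : n ≠ 0)])

/-- The base set of the trivialization. -/
def VS : Set (Mstar α) := {q | gR α φ q.1 ∈ Complex.slitPlane}

lemma gR_continuousAt' (q : Mstar α) : ContinuousAt (gR α φ) q.1 := by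
  obtain ⟨z, hz, hQ, hmk⟩ := q.2
  rw [← hmk]
  exact gR_continuousAt α φ hz hQ

lemma continuous_gR_MS : Continuous (fun q : Mstar α => gR α φ q.1) :=
  continuous_iff_continuousAt.mpr fun q =>
    (gR_continuousAt' α φ q).comp continuous_subtype_val.continuousAt

lemma isOpen_VS : IsOpen (VS α φ) :=
  Complex.isOpen_slitPlane.preimage (continuous_gR_MS α φ)

include hn in
lemma V_pack (q : Mstar α) (hq : q ∈ VS α φ) :
    Qp α (sP φ q.1) * gR α φ q.1 = 1 ∧ φ (sP φ q.1) = 1 ∧ (∃ hs : sP φ q.1 ≠ 0,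
      Projectivization.mk ℂ (sP φ q.1) hs = q.1) ∧ ContinuousAt (sP φ) q.1 := by
  obtain ⟨z, hz, hQ, hmk⟩ := q.2
  have e1 : q.1 = Projectivization.mk ℂ z hz := hmk.symm
  have hq2 : gR α φ q.1 ∈ Complex.slitPlane := hq
  rw [e1] at hq2 ⊢
  rw [gR_mk] at hq2
  have hφ : φ z ≠ 0 := by
    intro h0
    exact Complex.slitPlane_ne_zero hq2 (by rw [h0, zero_pow (by omega : n ≠ 0), zero_mul])
  have hs1 : Qp α ((φ z)⁻¹ • z) = (φ z ^ n)⁻¹ * Qp α z := by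
    rw [Qp_smul, inv_pow]
  refine ⟨?_, ?_, ⟨?_, ?_⟩, ?_⟩
  · rw [sP_mk, gR_mk, hs1]
    field_simp
  · rw [sP_mk, map_smul, smul_eq_mul, inv_mul_cancel₀ hφ]
  · rw [sP_mk]
    exact smul_ne_zero (inv_ne_zero hφ) hz
  · rw [Projectivization.mk_eq_mk_iff]
    exact ⟨Units.mk0 (φ z)⁻¹ (inv_ne_zero hφ), rfl⟩
  · exact sP_continuousAt φ hz hφ

include hn in
lemma F_pack (z : Fib α) (hq : pmap α hn z ∈ VS α φ) :
    gR α φ (pmap α hn z).1 = φ z.1 ^ n ∧ φ z.1 ≠ 0 := by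
  have e : gR α φ (pmap α hn z).1 = φ z.1 ^ n := by
    show gR α φ (Projectivization.mk ℂ z.1 (fib_ne_zero α hn z)) = _
    rw [gR_mk, z.2, inv_one, mul_one]
  refine ⟨e, ?_⟩
  intro h0
  have hq2 : gR α φ (pmap α hn z).1 ∈ Complex.slitPlane := hq
  rw [e, h0, zero_pow (by omega : n ≠ 0)] at hq2
  exact Complex.slitPlane_ne_zero hq2 rfl

open Classical in
/-- Forward map of the trivialization. -/
noncomputable def toF (z : Fib α) : Mstar α × {ζ : ℂ // ζ ^ n = 1} :=
  (pmap α hn z,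
    if h : (φ z.1 / rr α φ (pmap α hn z).1) ^ n = 1 then ⟨_, h⟩ else ⟨1, one_pow n⟩)

open Classical in
/-- Inverse map of the trivialization. -/
noncomputable def invF (z₀ : Fib α) (x : Mstar α × {ζ : ℂ // ζ ^ n = 1}) : Fib α :=
  if h : Qp α ((x.2.1 * rr α φ x.1.1) • sP φ x.1.1) = 1 then ⟨_, h⟩ else z₀

include hn in
lemma toF_eq (z : Fib α) (hz : pmap α hn z ∈ VS α φ) :
    toF α hn φ z = (pmap α hn z,
      ⟨φ z.1 / rr α φ (pmap α hn z).1, by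
        obtain ⟨e, hφ⟩ := F_pack α hn φ z hz
        rw [div_pow, rr_pow α hn φ, e, div_self (pow_ne_zero n hφ)]⟩) := by
  rw [toF, dif_pos]

include hn in
lemma invF_eq (z₀ : Fib α) (x : Mstar α × {ζ : ℂ // ζ ^ n = 1}) (hx : x.1 ∈ VS α φ) :
    invF α φ z₀ x = ⟨(x.2.1 * rr α φ x.1.1) • sP φ x.1.1, by
      obtain ⟨h1, h2, h3, h4⟩ := V_pack α hn φ x.1 hx
      rw [Qp_smul, mul_pow, x.2.2, one_mul, rr_pow α hn φ, mul_comm, h1]⟩ := by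
  rw [invF, dif_pos]

include hn in
lemma pmap_invF (z₀ : Fib α) (x : Mstar α × {ζ : ℂ // ζ ^ n = 1}) (hx : x.1 ∈ VS α φ) :
    pmap α hn (invF α φ z₀ x) = x.1 := by
  rw [invF_eq α hn φ z₀ x hx]
  obtain ⟨h1, h2, ⟨hs, hmk⟩, h4⟩ := V_pack α hn φ x.1 hx
  have hgR : gR α φ x.1.1 ≠ 0 := Complex.slitPlane_ne_zero hx
  have hrr : rr α φ x.1.1 ≠ 0 := rr_ne α hn φ _ hgR
  have hζ : x.2.1 ≠ 0 := by
    intro h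
    exact one_ne_zero (by rw [← x.2.2, h, zero_pow (by omega : n ≠ 0)])
  refine Subtype.ext ?_
  show Projectivization.mk ℂ ((x.2.1 * rr α φ x.1.1) • sP φ x.1.1) _ = x.1.1
  conv_rhs => rw [← hmk]
  rw [Projectivization.mk_eq_mk_iff]
  exact ⟨Units.mk0 _ (mul_ne_zero hζ hrr), rfl⟩

include hn in
lemma linv (z₀ : Fib α) (z : Fib α) (hz : pmap α hn z ∈ VS α φ) :
    invF α φ z₀ (toF α hn φ z) = z := by
  obtain ⟨e, hφ⟩ := F_pack α hn φ z hz
  have hgR : gR α φ (pmap α hn z).1 ≠ 0 := by rw [e]; exact pow_ne_zero n hφ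
  have hrr := rr_ne α hn φ _ hgR
  rw [toF_eq α hn φ z hz, invF_eq α hn φ z₀ _ hz]
  refine Subtype.ext ?_
  show (φ z.1 / rr α φ (pmap α hn z).1 * rr α φ (pmap α hn z).1) • sP φ (pmap α hn z).1 = z.1
  rw [div_mul_cancel₀ _ hrr]
  show φ z.1 • (φ z.1)⁻¹ • z.1 = z.1
  rw [smul_smul, mul_inv_cancel₀ hφ, one_smul]

include hn in
lemma rinv (z₀ : Fib α) (x : Mstar α × {ζ : ℂ // ζ ^ n = 1}) (hx : x.1 ∈ VS α φ) :
    toF α hn φ (invF α φ z₀ x) = x := by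
  have hpm := pmap_invF α hn φ z₀ x hx
  have hgR : gR α φ x.1.1 ≠ 0 := Complex.slitPlane_ne_zero hx
  have hrr := rr_ne α hn φ _ hgR
  obtain ⟨h1, h2, _, _⟩ := V_pack α hn φ x.1 hx
  rw [toF_eq α hn φ _ (by rw [hpm]; exact hx)]
  refine Prod.ext hpm (Subtype.ext ?_)
  show φ (invF α φ z₀ x).1 / rr α φ (pmap α hn (invF α φ z₀ x)).1 = x.2.1
  rw [hpm, invF_eq α hn φ z₀ x hx]
  show φ ((x.2.1 * rr α φ x.1.1) • sP φ x.1.1) / rr α φ x.1.1 = x.2.1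
  rw [map_smul, smul_eq_mul, h2, mul_one, mul_div_cancel_right₀ _ hrr]

include hn in
lemma contOn_toF : ContinuousOn (toF α hn φ) (pmap α hn ⁻¹' VS α φ) := by
  refine ContinuousOn.prodMk (pmap_continuous α hn).continuousOn ?_
  rw [Topology.IsEmbedding.subtypeVal.isInducing.continuousOn_iff]
  refine ContinuousOn.congr (f := fun z : Fib α => φ z.1 / rr α φ (pmap α hn z).1) ?_ ?_
  · intro z hz
    have hsl : gR α φ (pmap α hn z).1 ∈ Complex.slitPlane := hz
    apply ContinuousAt.continuousWithinAt
    have hpc : ContinuousAt (fun z : Fib α => (pmap α hn z).1) z :=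
      (continuous_subtype_val.comp (pmap_continuous α hn)).continuousAt
    have hgc : ContinuousAt (fun z : Fib α => gR α φ (pmap α hn z).1) z :=
      ContinuousAt.comp (gR_continuousAt' α φ (pmap α hn z)) hpc
    have hrc : ContinuousAt (fun z : Fib α => rr α φ (pmap α hn z).1) z :=
      ContinuousAt.comp (g := (· ^ ((n : ℂ)⁻¹)))
        (f := fun z : Fib α => gR α φ (pmap α hn z).1) (continuousAt_cpow_const hsl) hgc
    have hnum : ContinuousAt (fun z : Fib α => φ z.1) z :=
      (φ.continuous_of_finiteDimensional.comp continuous_subtype_val).continuousAt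
    exact hnum.div hrc (rr_ne α hn φ _ (Complex.slitPlane_ne_zero hsl))
  · intro z hz
    exact congrArg (fun p : Mstar α × {ζ : ℂ // ζ ^ n = 1} => (p.2 : ℂ)) (toF_eq α hn φ z hz)

include hn in
lemma contOn_invF (z₀ : Fib α) :
    ContinuousOn (invF α φ z₀) ((VS α φ) ×ˢ (Set.univ : Set {ζ : ℂ // ζ ^ n = 1})) := by
  rw [Topology.IsEmbedding.subtypeVal.isInducing.continuousOn_iff]
  refine ContinuousOn.congr
    (f := fun x : Mstar α × {ζ : ℂ // ζ ^ n = 1} => (x.2.1 * rr α φ x.1.1) • sP φ x.1.1) ?_ ?_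
  · intro x hx
    have hx1 : x.1 ∈ VS α φ := hx.1
    have hsl : gR α φ x.1.1 ∈ Complex.slitPlane := hx1
    apply ContinuousAt.continuousWithinAt
    have hfc : ContinuousAt (fun x : Mstar α × {ζ : ℂ // ζ ^ n = 1} => x.1.1) x :=
      (continuous_subtype_val.comp continuous_fst).continuousAt
    have hgc : ContinuousAt (fun x : Mstar α × {ζ : ℂ // ζ ^ n = 1} => gR α φ x.1.1) x :=
      ContinuousAt.comp (gR_continuousAt' α φ x.1) hfc
    have hrc : ContinuousAt (fun x : Mstar α × {ζ : ℂ // ζ ^ n = 1} => rr α φ x.1.1) x :=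
      ContinuousAt.comp (g := (· ^ ((n : ℂ)⁻¹)))
        (f := fun x : Mstar α × {ζ : ℂ // ζ ^ n = 1} => gR α φ x.1.1)
        (continuousAt_cpow_const hsl) hgc
    have hzc : ContinuousAt (fun x : Mstar α × {ζ : ℂ // ζ ^ n = 1} => (x.2.1 : ℂ)) x :=
      (continuous_subtype_val.comp continuous_snd).continuousAt
    have hsc : ContinuousAt (fun x : Mstar α × {ζ : ℂ // ζ ^ n = 1} => sP φ x.1.1) x :=
      ContinuousAt.comp ((V_pack α hn φ x.1 hx1).2.2.2) hfc
    exact (hzc.mul hrc).smul hsc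
  · intro x hx
    exact congrArg (fun z : Fib α => (z : Fin ℓ → ℂ)) (invF_eq α hn φ z₀ x hx.1)

include hn in
lemma evenly (q₀ : Mstar α) : IsEvenlyCovered (pmap α hn) q₀ {ζ : ℂ // ζ ^ n = 1} := by
  haveI : Finite {ζ : ℂ // ζ ^ n = 1} := roots_finite hn
  obtain ⟨z₀, hz₀⟩ := pmap_surjective α hn q₀
  obtain ⟨i₀, hi₀⟩ : ∃ i, z₀.1 i ≠ 0 := by
    by_contra h; push_neg at h; exact fib_ne_zero α hn z₀ (funext h)
  set φ : (Fin ℓ → ℂ) →ₗ[ℂ] ℂ := (z₀.1 i₀)⁻¹ • LinearMap.proj i₀ with hφdef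
  have hφz₀ : φ z₀.1 = 1 := by
    simp only [hφdef, LinearMap.smul_apply, LinearMap.proj_apply, smul_eq_mul]
    exact inv_mul_cancel₀ hi₀
  have hq₀ : q₀ ∈ VS α φ := by
    show gR α φ q₀.1 ∈ Complex.slitPlane
    rw [← hz₀]
    show gR α φ (Projectivization.mk ℂ z₀.1 (fib_ne_zero α hn z₀)) ∈ _
    rw [gR_mk, hφz₀, one_pow, z₀.2, inv_one, mul_one]
    exact Complex.one_mem_slitPlane
  exact IsEvenlyCovered.of_trivialization (t := ⟨{
    toFun := toF α hn φ
    invFun := invF α φ z₀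
    source := pmap α hn ⁻¹' VS α φ
    target := VS α φ ×ˢ Set.univ
    map_source' := fun z hz => ⟨hz, Set.mem_univ _⟩
    map_target' := fun x hx => by
      show pmap α hn (invF α φ z₀ x) ∈ VS α φ
      rw [pmap_invF α hn φ z₀ x hx.1]; exact hx.1
    left_inv' := fun z hz => linv α hn φ z₀ z hz
    right_inv' := fun x hx => rinv α hn φ z₀ x hx.1
    open_source := (isOpen_VS α φ).preimage (pmap_continuous α hn)
    open_target := (isOpen_VS α φ).prod isOpen_univ
    continuousOn_toFun := contOn_toF α hn φ
    continuousOn_invFun := contOn_invF α hn φ z₀ },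
    VS α φ, isOpen_VS α φ, rfl, rfl, fun z hz => rfl⟩) hq₀

include hn in
lemma isCoveringMap : IsCoveringMap (pmap α hn) :=
  fun q => (evenly α hn q).to_isEvenlyCovered_preimage

end MilnorCover

/-- For a central arrangement given by nonzero linear forms `α₁,…,αₙ`
(`n ≥ 1`), the restriction to the Milnor fiber `F = Q⁻¹(1)` of the quotient map
`π : ℂ^ℓ ∖ {0} → ℙ(ℂ^ℓ)` is an `n`-fold covering map of `F` onto the projectivized
complement `M*`: it is a covering map and each of its fibers has exactly `n` elements. -/
theorem milnor_fiber_covering_projectivized_complement {ℓ n : ℕ} (hn : 1 ≤ n)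
    (α : Fin n → ((Fin ℓ → ℂ) →ₗ[ℂ] ℂ)) (hα : ∀ i, α i ≠ 0) :
    ∃ p : {z : Fin ℓ → ℂ // (∏ i, α i z) = 1} →
        {q : Projectivization ℂ (Fin ℓ → ℂ) //
          ∃ z : Fin ℓ → ℂ, ∃ hz : z ≠ 0, (∏ i, α i z) ≠ 0 ∧ Projectivization.mk ℂ z hz = q},
      (∀ (z : {z : Fin ℓ → ℂ // (∏ i, α i z) = 1}) (hz : (z : Fin ℓ → ℂ) ≠ 0),
        (p z : Projectivization ℂ (Fin ℓ → ℂ)) = Projectivization.mk ℂ (z : Fin ℓ → ℂ) hz) ∧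
      IsCoveringMap p ∧
      ∀ q, Nat.card {z : {z : Fin ℓ → ℂ // (∏ i, α i z) = 1} // p z = q} = n := by
  exact ⟨MilnorCover.pmap α hn, fun z hz => rfl, MilnorCover.isCoveringMap α hn,
    MilnorCover.card_fiber α hn⟩
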